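/- (Splitting of the Boson–Fermion component) For all natural numbers k ≥ 1 and q ≥ 1 with n = k + q, the subspace H_{k,q} of H^{⊗n} decomposes as the internal direct sum H_{k,q} = H_{k,q}^+ ⊕ H_{k,q}^−, where H_{k,q}^+ = H_{k,q} ∩ H^{⊙[k+1],∧[q−1]} and H_{k,q}^− = H_{k,q} ∩ H^{⊙[k−1],∧[q+1]}. -/

import Mathlib

open scoped BigOperators

noncomputable section

variable (F : Type*) [Field F] [CharZero F] (H : Type*) [AddCommGroup H] [Module F H]

/-- The `n`-th tensor power of `H` over `F`. -/
abbrev TP (n : ℕ) : Type _ := PiTensorProduct F (fun _ : Fin n => H)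

/-- The action of a permutation `σ ∈ S_n` on the `n`-th tensor power,
permuting the tensor factors. -/
def permMap (n : ℕ) (σ : Equiv.Perm (Fin n)) : TP F H n →ₗ[F] TP F H n :=
  (PiTensorProduct.reindex F (fun _ : Fin n => H) σ).toLinearMap

/-- Identification of tensor powers of equal degrees. -/
def tpCast {m m' : ℕ} (hm : m = m') : TP F H m →ₗ[F] TP F H m' :=
  (PiTensorProduct.reindex F (fun _ : Fin m => H) (finCongr hm)).toLinearMap

/-- The permutations of `{1, …, n}` moving only positions in `a`. -/
def permsOn (n : ℕ) (a : Finset (Fin n)) : Finset (Equiv.Perm (Fin n)) :=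
  Finset.univ.filter fun σ => ∀ i, i ∉ a → σ i = i

/-- `S_a`: symmetrisation over the positions in `a` (the average over all
permutations of the positions in `a`, fixing the other positions). -/
def symOn (n : ℕ) (a : Finset (Fin n)) : TP F H n →ₗ[F] TP F H n :=
  (a.card.factorial : F)⁻¹ • ∑ σ ∈ permsOn n a, permMap F H n σ

/-- `A_a`: skew-symmetrisation over the positions in `a` (the signed average over
all permutations of the positions in `a`, fixing the other positions). -/
def altOn (n : ℕ) (a : Finset (Fin n)) : TP F H n →ₗ[F] TP F H n :=
  (a.card.factorial : F)⁻¹ • ∑ σ ∈ permsOn n a, (Equiv.Perm.sign σ : ℤ) • permMap F H n σ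

/-- The first `k` positions of `{1, …, n}`. -/
def firstSet (n k : ℕ) : Finset (Fin n) := Finset.univ.filter fun i => (i : ℕ) < k

/-- The last `m` positions of `{1, …, n}`. -/
def lastSet (n m : ℕ) : Finset (Fin n) := Finset.univ.filter fun i => n - m ≤ (i : ℕ)

/-- `H^{⊙a,∧aᶜ}`: the image of `S_a ∘ A_{aᶜ}`, the subspace of `n`-tensors symmetric in
the positions of `a` and skew-symmetric in the positions of `aᶜ`. -/
def Hgen (n : ℕ) (a : Finset (Fin n)) : Submodule F (TP F H n) :=
  LinearMap.range (symOn F H n a ∘ₗ altOn F H n aᶜ)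

/-- `H_{k,n-k} = H^{⊙k} ⊗ H^{∧(n-k)}`: the subspace of `n`-tensors symmetric in the
first `k` positions and skew-symmetric in the remaining positions. -/
def Hmix (n k : ℕ) : Submodule F (TP F H n) := Hgen F H n (firstSet n k)

/-- `H^{⊙[k],∧[n-k]}`: the span of the subspaces `H^{⊙a,∧aᶜ}` over all `k`-element
subsets `a ⊆ {1, …, n}`. -/
def HmixSpan (n k : ℕ) : Submodule F (TP F H n) :=
  ⨆ a ∈ {a : Finset (Fin n) | a.card = k}, Hgen F H n a

/-- The global operator whose restriction to `H_{k,q}` (with `m = q + 1`, `n = k + q`)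
is `d̆_q`: skew-symmetrisation of the last `m` positions, scaled by `m`. -/
def dOp (n m : ℕ) : TP F H n →ₗ[F] TP F H n := (m : F) • altOn F H n (lastSet n m)

/-- The global operator whose restriction to `H_{k-1,q+1}` (with `m = k`, `n = k + q`)
is `d̆*_q`: symmetrisation of the first `m` positions, scaled by `m`. -/
def dStarOp (n m : ℕ) : TP F H n →ₗ[F] TP F H n := (m : F) • symOn F H n (firstSet n m)

/-- The elementary element `h₁⊙…⊙h_k ⊗ x₁∧…∧x_q` of `H_{k,q} ⊆ H^{⊗(k+q)}`. -/
def elem (k q : ℕ) (h : Fin k → H) (x : Fin q → H) : TP F H (k + q) :=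
  ∑ ρ : Equiv.Perm (Fin k), ∑ τ : Equiv.Perm (Fin q),
    (Equiv.Perm.sign τ : ℤ) •
      (PiTensorProduct.tprod F (Fin.append (h ∘ ρ) (x ∘ τ)) : TP F H (k + q))


section Aux

open Equiv Finset

omit [Field F] [CharZero F] [AddCommGroup H] [Module F H]

theorem mem_permsOn {n : ℕ} {a : Finset (Fin n)} {σ : Equiv.Perm (Fin n)} :
    σ ∈ permsOn n a ↔ ∀ i ∉ a, σ i = i := by
  simp [permsOn]

theorem one_mem_permsOn {n : ℕ} {a : Finset (Fin n)} : (1 : Equiv.Perm (Fin n)) ∈ permsOn n a :=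
  mem_permsOn.2 fun _ _ => rfl

theorem mul_mem_permsOn {n : ℕ} {a : Finset (Fin n)} {σ τ : Equiv.Perm (Fin n)}
    (hσ : σ ∈ permsOn n a) (hτ : τ ∈ permsOn n a) : σ * τ ∈ permsOn n a := by
  rw [mem_permsOn] at *
  intro i hi
  simp [Equiv.Perm.mul_apply, hτ i hi, hσ i hi]

theorem inv_mem_permsOn {n : ℕ} {a : Finset (Fin n)} {σ : Equiv.Perm (Fin n)}
    (hσ : σ ∈ permsOn n a) : σ⁻¹ ∈ permsOn n a := by
  rw [mem_permsOn] at *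
  intro i hi
  conv_lhs => rw [← hσ i hi]
  simp

theorem permsOn_mono {n : ℕ} {a b : Finset (Fin n)} (h : a ⊆ b) : permsOn n a ⊆ permsOn n b := by
  intro σ hσ
  rw [mem_permsOn] at *
  exact fun i hi => hσ i fun hia => hi (h hia)

theorem swap_mem_permsOn {n : ℕ} {a : Finset (Fin n)} {i j : Fin n} (hi : i ∈ a) (hj : j ∈ a) :
    Equiv.swap i j ∈ permsOn n a :=
  mem_permsOn.2 fun l hl =>
    Equiv.swap_apply_of_ne_of_ne (fun h => hl (h ▸ hi)) (fun h => hl (h ▸ hj))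

theorem card_permsOn {n : ℕ} (a : Finset (Fin n)) : (permsOn n a).card = a.card.factorial := by
  classical
  have e1 : {σ : Equiv.Perm (Fin n) // σ ∈ permsOn n a} ≃
      {f : Equiv.Perm (Fin n) // ∀ x, ¬ (x ∈ a) → f x = x} :=
    Equiv.subtypeEquivRight (fun σ => mem_permsOn)
  have e2 : {f : Equiv.Perm (Fin n) // ∀ x, ¬ (x ∈ a) → f x = x} ≃
      Equiv.Perm {x : Fin n // x ∈ a} :=
    (Equiv.Perm.subtypeEquivSubtypePerm (· ∈ a)).symm
  rw [← Fintype.card_coe (permsOn n a), Fintype.card_congr (e1.trans e2), Fintype.card_perm,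
    Fintype.card_coe]

theorem sum_permsOn_mul_right {M : Type*} [AddCommMonoid M] {n : ℕ} {a : Finset (Fin n)}
    {τ : Equiv.Perm (Fin n)} (hτ : τ ∈ permsOn n a) (f : Equiv.Perm (Fin n) → M) :
    ∑ σ ∈ permsOn n a, f (σ * τ) = ∑ σ ∈ permsOn n a, f σ :=
  Finset.sum_equiv (Equiv.mulRight τ)
    (fun σ => ⟨fun h => mul_mem_permsOn h hτ,
      fun h => by simpa using mul_mem_permsOn h (inv_mem_permsOn hτ)⟩)
    (fun σ _ => rfl)

theorem sum_permsOn_mul_left {M : Type*} [AddCommMonoid M] {n : ℕ} {a : Finset (Fin n)}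
    {τ : Equiv.Perm (Fin n)} (hτ : τ ∈ permsOn n a) (f : Equiv.Perm (Fin n) → M) :
    ∑ σ ∈ permsOn n a, f (τ * σ) = ∑ σ ∈ permsOn n a, f σ :=
  Finset.sum_equiv (Equiv.mulLeft τ)
    (fun σ => ⟨fun h => mul_mem_permsOn hτ h,
      fun h => by simpa using mul_mem_permsOn (inv_mem_permsOn hτ) h⟩)
    (fun σ _ => rfl)

theorem conj_mem_permsOn {n : ℕ} {a : Finset (Fin n)} (σ : Equiv.Perm (Fin n))
    {π : Equiv.Perm (Fin n)} (hπ : π ∈ permsOn n a) : σ * π * σ⁻¹ ∈ permsOn n (a.image σ) := by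
  rw [mem_permsOn] at *
  intro j hj
  have h1 : σ⁻¹ j ∉ a := fun hmem => hj (Finset.mem_image.2 ⟨σ⁻¹ j, hmem, by simp⟩)
  rw [Equiv.Perm.mul_apply, Equiv.Perm.mul_apply, hπ _ h1]
  simp

theorem image_image_inv {n : ℕ} (a : Finset (Fin n)) (σ : Equiv.Perm (Fin n)) :
    (a.image σ).image ((σ⁻¹ : Equiv.Perm (Fin n)) : Fin n → Fin n) = a := by
  ext j
  simp

theorem sum_permsOn_conj {M : Type*} [AddCommMonoid M] {n : ℕ} {a : Finset (Fin n)}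
    (σ : Equiv.Perm (Fin n)) (f : Equiv.Perm (Fin n) → M) :
    ∑ π ∈ permsOn n a, f (σ * π * σ⁻¹) = ∑ π ∈ permsOn n (a.image σ), f π := by
  refine Finset.sum_equiv ((Equiv.mulLeft σ).trans (Equiv.mulRight σ⁻¹)) (fun π => ?_)
    (fun π _ => rfl)
  constructor
  · intro h
    exact conj_mem_permsOn σ h
  · intro h
    have h' : σ * π * σ⁻¹ ∈ permsOn n (a.image σ) := h
    have h2 := conj_mem_permsOn σ⁻¹ h'
    rw [image_image_inv] at h2
    have : σ⁻¹ * (σ * π * σ⁻¹) * σ⁻¹⁻¹ = π := by group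
    rwa [this] at h2

end Aux

section Aux2

open Equiv Finset

/-- The sign of a permutation, as an element of `F`. -/
def sgn {n : ℕ} (σ : Equiv.Perm (Fin n)) : F := ((Equiv.Perm.sign σ : ℤ) : F)

theorem permMap_permMap {n : ℕ} (σ τ : Equiv.Perm (Fin n)) (x : TP F H n) :
    permMap F H n σ (permMap F H n τ x) = permMap F H n (σ * τ) x := by
  simp only [permMap, LinearEquiv.coe_coe]
  exact PiTensorProduct.reindex_reindex (R := F) (s := fun _ : Fin n => H) τ σ x

theorem permMap_one {n : ℕ} (x : TP F H n) : permMap F H n 1 x = x := by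
  simp only [permMap, LinearEquiv.coe_coe]
  rw [show (1 : Equiv.Perm (Fin n)) = Equiv.refl (Fin n) from rfl, PiTensorProduct.reindex_refl]
  rfl

theorem symOn_apply {n : ℕ} (a : Finset (Fin n)) (x : TP F H n) :
    symOn F H n a x = (a.card.factorial : F)⁻¹ • ∑ σ ∈ permsOn n a, permMap F H n σ x := by
  simp [symOn, LinearMap.sum_apply]

theorem altOn_apply {n : ℕ} (a : Finset (Fin n)) (x : TP F H n) :
    altOn F H n a x =
      (a.card.factorial : F)⁻¹ • ∑ σ ∈ permsOn n a, sgn F σ • permMap F H n σ x := by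
  simp only [altOn, LinearMap.smul_apply, LinearMap.sum_apply, sgn]
  exact congrArg _ (Finset.sum_congr rfl fun σ _ => by rw [← Int.cast_smul_eq_zsmul F]; rfl)

theorem sgn_mul {n : ℕ} (σ τ : Equiv.Perm (Fin n)) : sgn F (σ * τ) = sgn F σ * sgn F τ := by
  simp [sgn, Equiv.Perm.sign_mul]

theorem sgn_sq {n : ℕ} (σ : Equiv.Perm (Fin n)) : sgn F σ * sgn F σ = 1 := by
  have h : (Equiv.Perm.sign σ) * (Equiv.Perm.sign σ) = 1 := Int.units_mul_self _
  unfold sgn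
  rw [← Int.cast_mul, ← Units.val_mul, h, Units.val_one, Int.cast_one]

theorem sgn_one {n : ℕ} : sgn F (1 : Equiv.Perm (Fin n)) = 1 := by simp [sgn]

theorem sgn_swap {n : ℕ} {i j : Fin n} (h : i ≠ j) : sgn F (Equiv.swap i j) = -1 := by
  simp [sgn, Equiv.Perm.sign_swap h]

theorem factorial_cast_ne_zero (m : ℕ) : ((m.factorial : F)) ≠ 0 :=
  Nat.cast_ne_zero.mpr m.factorial_ne_zero

theorem symOn_permMap {n : ℕ} {a : Finset (Fin n)} {τ : Equiv.Perm (Fin n)}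
    (hτ : τ ∈ permsOn n a) (x : TP F H n) :
    symOn F H n a (permMap F H n τ x) = symOn F H n a x := by
  rw [symOn_apply, symOn_apply]
  congr 1
  rw [← sum_permsOn_mul_right hτ (fun σ => permMap F H n σ x)]
  exact Finset.sum_congr rfl fun σ _ => permMap_permMap F H σ τ x

theorem permMap_symOn {n : ℕ} {a : Finset (Fin n)} {τ : Equiv.Perm (Fin n)}
    (hτ : τ ∈ permsOn n a) (x : TP F H n) :
    permMap F H n τ (symOn F H n a x) = symOn F H n a x := by
  rw [symOn_apply, map_smul, map_sum]
  congr 1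
  rw [← sum_permsOn_mul_left hτ (fun σ => permMap F H n σ x)]
  exact Finset.sum_congr rfl fun σ _ => permMap_permMap F H τ σ x

theorem altOn_permMap {n : ℕ} {a : Finset (Fin n)} {τ : Equiv.Perm (Fin n)}
    (hτ : τ ∈ permsOn n a) (x : TP F H n) :
    altOn F H n a (permMap F H n τ x) = sgn F τ • altOn F H n a x := by
  rw [altOn_apply, altOn_apply, smul_comm (sgn F τ)]
  congr 1
  rw [← sum_permsOn_mul_right hτ (fun σ => sgn F σ • permMap F H n σ x), Finset.smul_sum]
  refine Finset.sum_congr rfl fun σ _ => ?_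
  rw [permMap_permMap, smul_smul, sgn_mul,
    show sgn F τ * (sgn F σ * sgn F τ) = sgn F σ * (sgn F τ * sgn F τ) by ring, sgn_sq, mul_one]

theorem permMap_altOn {n : ℕ} {a : Finset (Fin n)} {τ : Equiv.Perm (Fin n)}
    (hτ : τ ∈ permsOn n a) (x : TP F H n) :
    permMap F H n τ (altOn F H n a x) = sgn F τ • altOn F H n a x := by
  rw [altOn_apply, map_smul, map_sum, smul_comm (sgn F τ)]
  congr 1
  rw [← sum_permsOn_mul_left hτ (fun σ => sgn F σ • permMap F H n σ x), Finset.smul_sum]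
  refine Finset.sum_congr rfl fun σ _ => ?_
  rw [map_smul, permMap_permMap, smul_smul, sgn_mul,
    show sgn F τ * (sgn F τ * sgn F σ) = sgn F σ * (sgn F τ * sgn F τ) by ring, sgn_sq, mul_one]

theorem symOn_symOn {n : ℕ} {a b : Finset (Fin n)} (h : a ⊆ b) (x : TP F H n) :
    symOn F H n a (symOn F H n b x) = symOn F H n b x := by
  rw [symOn_apply F H a]
  have : ∀ σ ∈ permsOn n a, permMap F H n σ (symOn F H n b x) = symOn F H n b x :=
    fun σ hσ => permMap_symOn F H (permsOn_mono h hσ) x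
  rw [Finset.sum_congr rfl this, Finset.sum_const, card_permsOn,
    ← Nat.cast_smul_eq_nsmul F, smul_smul, inv_mul_cancel₀ (factorial_cast_ne_zero F _), one_smul]

theorem altOn_altOn {n : ℕ} {a b : Finset (Fin n)} (h : a ⊆ b) (x : TP F H n) :
    altOn F H n a (altOn F H n b x) = altOn F H n b x := by
  rw [altOn_apply F H a]
  have : ∀ σ ∈ permsOn n a, sgn F σ • permMap F H n σ (altOn F H n b x) = altOn F H n b x := by
    intro σ hσ
    rw [permMap_altOn F H (permsOn_mono h hσ) x, smul_smul, sgn_sq, one_smul]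
  rw [Finset.sum_congr rfl this, Finset.sum_const, card_permsOn,
    ← Nat.cast_smul_eq_nsmul F, smul_smul, inv_mul_cancel₀ (factorial_cast_ne_zero F _), one_smul]

theorem perm_commute {n : ℕ} {a b : Finset (Fin n)} (hd : Disjoint a b)
    {π ρ : Equiv.Perm (Fin n)} (hπ : π ∈ permsOn n a) (hρ : ρ ∈ permsOn n b) :
    π * ρ = ρ * π := by
  refine (Equiv.Perm.Disjoint.commute ?_).eq
  intro x
  by_cases hx : x ∈ a
  · exact Or.inr (mem_permsOn.1 hρ x (Finset.disjoint_left.1 hd hx))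
  · exact Or.inl (mem_permsOn.1 hπ x hx)

theorem permMap_symOn_of_disjoint {n : ℕ} {a b : Finset (Fin n)} (hd : Disjoint a b)
    {π : Equiv.Perm (Fin n)} (hπ : π ∈ permsOn n a) (x : TP F H n) :
    permMap F H n π (symOn F H n b x) = symOn F H n b (permMap F H n π x) := by
  rw [symOn_apply, symOn_apply, map_smul, map_sum]
  congr 1
  refine Finset.sum_congr rfl fun ρ hρ => ?_
  rw [permMap_permMap, permMap_permMap, perm_commute hd hπ hρ]

theorem permMap_altOn_of_disjoint {n : ℕ} {a b : Finset (Fin n)} (hd : Disjoint a b)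
    {π : Equiv.Perm (Fin n)} (hπ : π ∈ permsOn n a) (x : TP F H n) :
    permMap F H n π (altOn F H n b x) = altOn F H n b (permMap F H n π x) := by
  rw [altOn_apply, altOn_apply, map_smul, map_sum]
  congr 1
  refine Finset.sum_congr rfl fun ρ hρ => ?_
  rw [map_smul, permMap_permMap, permMap_permMap, perm_commute hd hπ hρ]

theorem symOn_altOn_of_disjoint {n : ℕ} {a b : Finset (Fin n)} (hd : Disjoint a b)
    (x : TP F H n) :
    symOn F H n a (altOn F H n b x) = altOn F H n b (symOn F H n a x) := by
  rw [symOn_apply F H a, symOn_apply F H a, map_smul, map_sum]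
  congr 1
  exact Finset.sum_congr rfl fun π hπ => permMap_altOn_of_disjoint F H hd hπ x

theorem permMap_symOn_image {n : ℕ} {a : Finset (Fin n)} (σ : Equiv.Perm (Fin n))
    (x : TP F H n) :
    permMap F H n σ (symOn F H n a x) = symOn F H n (a.image σ) (permMap F H n σ x) := by
  rw [symOn_apply, symOn_apply, map_smul, map_sum, Finset.card_image_of_injective a σ.injective]
  congr 1
  rw [← sum_permsOn_conj σ (fun π => permMap F H n π (permMap F H n σ x))]
  refine Finset.sum_congr rfl fun π _ => ?_
  rw [permMap_permMap, permMap_permMap]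
  congr 1
  group

theorem sgn_conj {n : ℕ} (σ π : Equiv.Perm (Fin n)) : sgn F (σ * π * σ⁻¹) = sgn F π := by
  unfold sgn
  rw [Equiv.Perm.sign_mul, Equiv.Perm.sign_mul, Equiv.Perm.sign_inv,
    mul_comm (Equiv.Perm.sign σ) (Equiv.Perm.sign π), mul_assoc, Int.units_mul_self, mul_one]

theorem permMap_altOn_image {n : ℕ} {a : Finset (Fin n)} (σ : Equiv.Perm (Fin n))
    (x : TP F H n) :
    permMap F H n σ (altOn F H n a x) = altOn F H n (a.image σ) (permMap F H n σ x) := by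
  rw [altOn_apply, altOn_apply, map_smul, map_sum, Finset.card_image_of_injective a σ.injective]
  congr 1
  rw [← sum_permsOn_conj σ (fun π => sgn F π • permMap F H n π (permMap F H n σ x))]
  refine Finset.sum_congr rfl fun π _ => ?_
  rw [map_smul, permMap_permMap, permMap_permMap, sgn_conj]
  congr 2
  group

end Aux2

section Aux3

open Equiv Finset

theorem smul_cancel {M : Type*} [AddCommGroup M] [Module F M] {c : F} (hc : c ≠ 0) {x : M}
    (h : c • x = 0) : x = 0 := by
  have := congrArg (fun y => c⁻¹ • y) h
  simpa [smul_smul, inv_mul_cancel₀ hc] using this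

theorem eq_neg_self_zero {M : Type*} [AddCommGroup M] [Module F M] {x : M}
    (h : x = -x) : x = 0 := by
  have h2 : (2 : F) • x = 0 := by
    rw [two_smul]
    nth_rewrite 2 [h]
    exact add_neg_cancel x
  exact smul_cancel F (two_ne_zero) h2

theorem altOn_eq_zero {n : ℕ} {a : Finset (Fin n)} {i j : Fin n} (hi : i ∈ a) (hj : j ∈ a)
    (hij : i ≠ j) {x : TP F H n} (hx : permMap F H n (Equiv.swap i j) x = x) :
    altOn F H n a x = 0 := by
  have h1 : altOn F H n a (permMap F H n (Equiv.swap i j) x) = altOn F H n a x := by rw [hx]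
  rw [altOn_permMap F H (swap_mem_permsOn hi hj), sgn_swap F hij, neg_one_smul] at h1
  exact eq_neg_self_zero F h1.symm

theorem symOn_eq_zero {n : ℕ} {a : Finset (Fin n)} {i j : Fin n} (hi : i ∈ a) (hj : j ∈ a)
    (hij : i ≠ j) {x : TP F H n} (hx : permMap F H n (Equiv.swap i j) x = -x) :
    symOn F H n a x = 0 := by
  have h1 : symOn F H n a (permMap F H n (Equiv.swap i j) x) = symOn F H n a (-x) := by rw [hx]
  rw [symOn_permMap F H (swap_mem_permsOn hi hj), map_neg] at h1
  exact eq_neg_self_zero F h1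

omit [Field F] [CharZero F] [AddCommGroup H] [Module F H] in
theorem sum_permsOn_insert {M : Type*} [AddCommMonoid M] {n : ℕ} {a : Finset (Fin n)}
    {x : Fin n} (hx : x ∉ a) (f : Equiv.Perm (Fin n) → M) :
    ∑ σ ∈ permsOn n (insert x a), f σ =
      ∑ p ∈ (insert x a) ×ˢ permsOn n a, f (p.2 * Equiv.swap p.1 x) := by
  refine Finset.sum_nbij' (i := fun σ => (σ⁻¹ x, σ * Equiv.swap (σ⁻¹ x) x))
      (j := fun p => p.2 * Equiv.swap p.1 x) ?_ ?_ ?_ ?_ ?_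
  · intro σ hσ
    rw [mem_permsOn] at hσ
    have h1 : σ⁻¹ x ∈ insert x a := by
      by_contra hc
      have := hσ _ hc
      have : x = σ⁻¹ x := by
        conv_lhs => rw [← show σ (σ⁻¹ x) = x from σ.apply_symm_apply x, this]
      exact hc (this ▸ Finset.mem_insert_self x a)
    rw [Finset.mem_product]
    refine ⟨h1, mem_permsOn.2 fun j hj => ?_⟩
    by_cases hjx : j = x
    · subst hjx
      simp [Equiv.Perm.mul_apply]
    · have hj' : j ∉ insert x a := by simp [hjx, hj]
      have h2 : Equiv.swap (σ⁻¹ x) x j = j :=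
        Equiv.swap_apply_of_ne_of_ne (fun hc => hj' (hc ▸ h1)) hjx
      rw [Equiv.Perm.mul_apply, h2]
      exact hσ _ hj'
  · rintro ⟨i, π⟩ hp
    rw [Finset.mem_product] at hp
    obtain ⟨hi, hπ⟩ := hp
    rw [mem_permsOn] at hπ
    refine mem_permsOn.2 fun j hj => ?_
    have hjx : j ≠ x := fun hc => hj (hc ▸ Finset.mem_insert_self x a)
    have hji : j ≠ i := fun hc => hj (hc ▸ hi)
    rw [Equiv.Perm.mul_apply, Equiv.swap_apply_of_ne_of_ne hji hjx]
    exact hπ _ fun hc => hj (Finset.mem_insert_of_mem hc)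
  · intro σ hσ
    simp only
    rw [Equiv.mul_swap_mul_self]
  · rintro ⟨i, π⟩ hp
    rw [Finset.mem_product] at hp
    obtain ⟨hi, hπ⟩ := hp
    rw [mem_permsOn] at hπ
    have hπx : π⁻¹ x = x := by
      conv_lhs => rw [← hπ _ hx]
      simp
    have h1 : (π * Equiv.swap i x)⁻¹ x = i := by
      rw [mul_inv_rev, Equiv.Perm.mul_apply, hπx, Equiv.swap_inv, Equiv.swap_apply_right]
    refine Prod.ext h1 ?_
    show (π * Equiv.swap i x) * Equiv.swap ((π * Equiv.swap i x)⁻¹ x) x = π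
    rw [h1, Equiv.mul_swap_mul_self]
  · intro σ hσ
    simp only
    rw [Equiv.mul_swap_mul_self]

theorem symOn_insert {n : ℕ} {a : Finset (Fin n)} {x : Fin n} (hx : x ∉ a) (v : TP F H n) :
    symOn F H n (insert x a) v =
      ((a.card + 1 : ℕ) : F)⁻¹ •
        ∑ i ∈ insert x a, symOn F H n a (permMap F H n (Equiv.swap i x) v) := by
  rw [symOn_apply, Finset.card_insert_of_notMem hx, Nat.factorial_succ,
    sum_permsOn_insert hx (fun σ => permMap F H n σ v), Finset.sum_product,
    Nat.cast_mul, mul_inv, mul_smul]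
  congr 1
  rw [Finset.smul_sum]
  refine Finset.sum_congr rfl fun i _ => ?_
  rw [symOn_apply]
  congr 1
  exact Finset.sum_congr rfl fun π _ => (permMap_permMap F H π (Equiv.swap i x) v).symm

theorem altOn_insert {n : ℕ} {a : Finset (Fin n)} {x : Fin n} (hx : x ∉ a) (v : TP F H n) :
    altOn F H n (insert x a) v =
      ((a.card + 1 : ℕ) : F)⁻¹ •
        ∑ i ∈ insert x a,
          sgn F (Equiv.swap i x) • altOn F H n a (permMap F H n (Equiv.swap i x) v) := by
  rw [altOn_apply, Finset.card_insert_of_notMem hx, Nat.factorial_succ,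
    sum_permsOn_insert hx (fun σ => sgn F σ • permMap F H n σ v), Finset.sum_product,
    Nat.cast_mul, mul_inv, mul_smul]
  congr 1
  rw [Finset.smul_sum]
  refine Finset.sum_congr rfl fun i _ => ?_
  rw [altOn_apply, smul_comm]
  congr 1
  rw [Finset.smul_sum]
  refine Finset.sum_congr rfl fun π _ => ?_
  rw [permMap_permMap, smul_smul, sgn_mul, mul_comm (sgn F π)]

theorem Hgen_mem_iff {n : ℕ} {a : Finset (Fin n)} {x : TP F H n} :
    x ∈ Hgen F H n a ↔ symOn F H n a (altOn F H n aᶜ x) = x := by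
  constructor
  · rintro ⟨u, rfl⟩
    simp only [LinearMap.comp_apply]
    rw [← symOn_altOn_of_disjoint F H disjoint_compl_right (altOn F H n aᶜ u),
      symOn_symOn F H (le_refl a), altOn_altOn F H (le_refl aᶜ)]
  · intro h
    exact ⟨x, by simpa [LinearMap.comp_apply] using h⟩

omit [Field F] [CharZero F] [AddCommGroup H] [Module F H] in
theorem compl_image_perm {n : ℕ} (a : Finset (Fin n)) (σ : Equiv.Perm (Fin n)) :
    (a.image σ)ᶜ = aᶜ.image σ := by
  ext j
  simp only [Finset.mem_compl, Finset.mem_image]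
  constructor
  · intro h
    exact ⟨σ⁻¹ j, fun hmem => h ⟨σ⁻¹ j, hmem, Equiv.apply_symm_apply σ j⟩,
      Equiv.apply_symm_apply σ j⟩
  · rintro ⟨i, hi, rfl⟩ ⟨i', hi', hii'⟩
    exact hi (σ.injective hii' ▸ hi')

theorem permMap_mem_Hgen {n : ℕ} {a : Finset (Fin n)} (σ : Equiv.Perm (Fin n)) {w : TP F H n}
    (hw : w ∈ Hgen F H n a) : permMap F H n σ w ∈ Hgen F H n (a.image σ) := by
  rw [Hgen_mem_iff] at hw ⊢
  rw [compl_image_perm, ← permMap_altOn_image F H σ, ← permMap_symOn_image F H σ, hw]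

end Aux3

section Aux4

open Finset

omit [Field F] [CharZero F] [AddCommGroup H] [Module F H]

theorem mem_firstSet {n k : ℕ} {i : Fin n} : i ∈ firstSet n k ↔ (i : ℕ) < k := by
  simp [firstSet]

theorem mem_lastSet {n m : ℕ} {i : Fin n} : i ∈ lastSet n m ↔ n - m ≤ (i : ℕ) := by
  simp [lastSet]

theorem card_firstSet {n k : ℕ} (h : k ≤ n) : (firstSet n k).card = k := by
  have e : {i : Fin n // i ∈ firstSet n k} ≃ Fin k :=
    { toFun := fun i => ⟨(i : Fin n), mem_firstSet.1 i.2⟩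
      invFun := fun j => ⟨⟨(j : ℕ), lt_of_lt_of_le j.2 h⟩, mem_firstSet.2 j.2⟩
      left_inv := fun i => by ext; rfl
      right_inv := fun j => by ext; rfl }
  rw [← Fintype.card_coe, Fintype.card_congr e, Fintype.card_fin]

theorem lastSet_eq_compl (n m : ℕ) : lastSet n m = (firstSet n (n - m))ᶜ := by
  ext i
  simp [firstSet, lastSet]

theorem card_lastSet {n m : ℕ} (h : m ≤ n) : (lastSet n m).card = m := by
  rw [lastSet_eq_compl, Finset.card_compl, card_firstSet (by omega), Fintype.card_fin]
  omega

theorem compl_firstSet_k (k q : ℕ) : (firstSet (k + q) k)ᶜ = lastSet (k + q) q := by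
  ext i
  simp only [Finset.mem_compl, mem_firstSet, mem_lastSet, not_lt]
  omega

theorem compl_firstSet_succ (k q : ℕ) (hq : 1 ≤ q) :
    (firstSet (k + q) (k + 1))ᶜ = lastSet (k + q) (q - 1) := by
  ext i
  simp only [Finset.mem_compl, mem_firstSet, mem_lastSet, not_lt]
  omega

theorem compl_firstSet_pred (k q : ℕ) (hk : 1 ≤ k) :
    (firstSet (k + q) (k - 1))ᶜ = lastSet (k + q) (q + 1) := by
  ext i
  simp only [Finset.mem_compl, mem_firstSet, mem_lastSet, not_lt]
  omega

theorem firstSet_mono {n k k' : ℕ} (h : k ≤ k') : firstSet n k ⊆ firstSet n k' := by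
  intro i hi
  rw [mem_firstSet] at *
  omega

theorem lastSet_mono {n m m' : ℕ} (h : m ≤ m') : lastSet n m ⊆ lastSet n m' := by
  intro i hi
  rw [mem_lastSet] at *
  omega

theorem disjoint_first_last {n k m : ℕ} (h : k + m ≤ n) :
    Disjoint (firstSet n k) (lastSet n m) := by
  rw [Finset.disjoint_left]
  intro i hi1 hi2
  rw [mem_firstSet] at hi1
  rw [mem_lastSet] at hi2
  omega

theorem firstSet_succ_eq {k q : ℕ} (hq : 1 ≤ q) :
    firstSet (k + q) (k + 1) = insert (⟨k, by omega⟩ : Fin (k + q)) (firstSet (k + q) k) := by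
  ext i
  simp only [mem_firstSet, Finset.mem_insert, Fin.ext_iff]
  omega

theorem lastSet_succ_eq {k q : ℕ} (hk : 1 ≤ k) :
    lastSet (k + q) (q + 1) =
      insert (⟨k - 1, by omega⟩ : Fin (k + q)) (lastSet (k + q) q) := by
  ext i
  simp only [mem_lastSet, Finset.mem_insert, Fin.ext_iff]
  omega

theorem kth_not_mem_firstSet {k q : ℕ} (hq : 1 ≤ q) :
    (⟨k, by omega⟩ : Fin (k + q)) ∉ firstSet (k + q) k := by
  simp [mem_firstSet]

theorem pred_not_mem_lastSet {k q : ℕ} (hk : 1 ≤ k) :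
    (⟨k - 1, by omega⟩ : Fin (k + q)) ∉ lastSet (k + q) q := by
  simp only [mem_lastSet, not_le]
  omega

theorem kth_mem_lastSet {k q : ℕ} (hk : 1 ≤ k) (hq : 1 ≤ q) :
    (⟨k, by omega⟩ : Fin (k + q)) ∈ lastSet (k + q) q := by
  simp only [mem_lastSet]
  omega

end Aux4

section Aux5

open Equiv Finset

theorem Hmix_mem_iff (k q : ℕ) {v : TP F H (k + q)} :
    v ∈ Hmix F H (k + q) k ↔
      symOn F H (k + q) (firstSet (k + q) k)
        (altOn F H (k + q) (lastSet (k + q) q) v) = v := by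
  have h : Hmix F H (k + q) k = Hgen F H (k + q) (firstSet (k + q) k) := rfl
  rw [h, Hgen_mem_iff, compl_firstSet_k]

theorem hv_sym (k q : ℕ) {v : TP F H (k + q)} (hv : v ∈ Hmix F H (k + q) k) :
    symOn F H (k + q) (firstSet (k + q) k) v = v := by
  rw [Hmix_mem_iff] at hv
  conv_lhs => rw [← hv]
  rw [symOn_symOn F H (Finset.Subset.refl _)]
  exact hv

theorem hv_alt (k q : ℕ) {v : TP F H (k + q)} (hv : v ∈ Hmix F H (k + q) k) :
    altOn F H (k + q) (lastSet (k + q) q) v = v := by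
  rw [Hmix_mem_iff] at hv
  conv_lhs => rw [← hv]
  rw [← symOn_altOn_of_disjoint F H (disjoint_first_last (by omega)),
    altOn_altOn F H (Finset.Subset.refl _)]
  exact hv

theorem hv_perm_sym (k q : ℕ) {v : TP F H (k + q)} (hv : v ∈ Hmix F H (k + q) k)
    {τ : Equiv.Perm (Fin (k + q))} (hτ : τ ∈ permsOn (k + q) (firstSet (k + q) k)) :
    permMap F H (k + q) τ v = v := by
  conv_lhs => rw [← hv_sym F H k q hv]
  rw [permMap_symOn F H hτ, hv_sym F H k q hv]

theorem hv_perm_alt (k q : ℕ) {v : TP F H (k + q)} (hv : v ∈ Hmix F H (k + q) k)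
    {ρ : Equiv.Perm (Fin (k + q))} (hρ : ρ ∈ permsOn (k + q) (lastSet (k + q) q)) :
    permMap F H (k + q) ρ v = sgn F ρ • v := by
  conv_lhs => rw [← hv_alt F H k q hv]
  rw [permMap_altOn F H hρ, hv_alt F H k q hv]

theorem P_permMap_sym (k q : ℕ) {τ : Equiv.Perm (Fin (k + q))}
    (hτ : τ ∈ permsOn (k + q) (firstSet (k + q) k)) (z : TP F H (k + q)) :
    symOn F H (k + q) (firstSet (k + q) k)
        (altOn F H (k + q) (lastSet (k + q) q) (permMap F H (k + q) τ z)) =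
      symOn F H (k + q) (firstSet (k + q) k)
        (altOn F H (k + q) (lastSet (k + q) q) z) := by
  rw [← permMap_altOn_of_disjoint F H (disjoint_first_last (by omega)) hτ z,
    symOn_permMap F H hτ]

theorem P_permMap_alt (k q : ℕ) {ρ : Equiv.Perm (Fin (k + q))}
    (hρ : ρ ∈ permsOn (k + q) (lastSet (k + q) q)) (z : TP F H (k + q)) :
    symOn F H (k + q) (firstSet (k + q) k)
        (altOn F H (k + q) (lastSet (k + q) q) (permMap F H (k + q) ρ z)) =
      sgn F ρ • symOn F H (k + q) (firstSet (k + q) k)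
        (altOn F H (k + q) (lastSet (k + q) q) z) := by
  rw [altOn_permMap F H hρ, map_smul]

theorem sgn_inv_mul {n : ℕ} (ρ : Equiv.Perm (Fin n)) : sgn F ρ⁻¹ * sgn F ρ = 1 := by
  rw [← sgn_mul, inv_mul_cancel, sgn_one]

theorem key_identity (k q : ℕ) (hk : 1 ≤ k) (hq : 1 ≤ q) {v : TP F H (k + q)}
    (hv : v ∈ Hmix F H (k + q) k) :
    ((q : F) * ((k : F) + 1)) •
        altOn F H (k + q) (lastSet (k + q) q)
          (symOn F H (k + q) (firstSet (k + q) (k + 1)) v) +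
      ((k : F) * ((q : F) + 1)) •
        symOn F H (k + q) (firstSet (k + q) k)
          (altOn F H (k + q) (lastSet (k + q) (q + 1)) v) =
    ((k : F) + (q : F)) • v := by
  have hvP := (Hmix_mem_iff F H k q).1 hv
  set x : Fin (k + q) := ⟨k, by omega⟩ with hxdef
  set y : Fin (k + q) := ⟨k - 1, by omega⟩ with hydef
  have hyx : y ≠ x := by
    rw [Fin.ne_iff_vne]
    show k - 1 ≠ k
    omega
  set w0 : TP F H (k + q) :=
    symOn F H (k + q) (firstSet (k + q) k)
      (altOn F H (k + q) (lastSet (k + q) q)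
        (permMap F H (k + q) (Equiv.swap y x) v)) with hw0def
  have hxmem : x ∉ firstSet (k + q) k := kth_not_mem_firstSet hq
  have hymem : y ∈ firstSet (k + q) k := by
    rw [mem_firstSet]
    show k - 1 < k
    omega
  have hxlast : x ∈ lastSet (k + q) q := kth_mem_lastSet hk hq
  have hylast : y ∉ lastSet (k + q) q := pred_not_mem_lastSet hk
  have hcomm : ∀ z : TP F H (k + q),
      altOn F H (k + q) (lastSet (k + q) q) (symOn F H (k + q) (firstSet (k + q) k) z) =
        symOn F H (k + q) (firstSet (k + q) k) (altOn F H (k + q) (lastSet (k + q) q) z) :=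
    fun z => (symOn_altOn_of_disjoint F H (disjoint_first_last (by omega)) z).symm
  -- the T-part
  have hsumT : ∑ i ∈ insert x (firstSet (k + q) k),
      altOn F H (k + q) (lastSet (k + q) q)
        (symOn F H (k + q) (firstSet (k + q) k)
          (permMap F H (k + q) (Equiv.swap i x) v)) = v + (k : F) • w0 := by
    rw [Finset.sum_insert hxmem]
    have h1 : altOn F H (k + q) (lastSet (k + q) q)
        (symOn F H (k + q) (firstSet (k + q) k)
          (permMap F H (k + q) (Equiv.swap x x) v)) = v := by
      rw [Equiv.swap_self, show (Equiv.refl (Fin (k + q))) = (1 : Equiv.Perm (Fin (k + q))) from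
        rfl, permMap_one, hcomm, hvP]
    have h2 : ∀ i ∈ firstSet (k + q) k,
        altOn F H (k + q) (lastSet (k + q) q)
          (symOn F H (k + q) (firstSet (k + q) k)
            (permMap F H (k + q) (Equiv.swap i x) v)) = w0 := by
      intro i hi
      rw [hcomm]
      by_cases hiy : i = y
      · rw [hiy]
      · have hix : i ≠ x := fun hc => hxmem (hc ▸ hi)
        have hπ : Equiv.swap i y ∈ permsOn (k + q) (firstSet (k + q) k) :=
          swap_mem_permsOn hi hymem
        have hconj : Equiv.swap i y * Equiv.swap y x * (Equiv.swap i y)⁻¹ =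
            Equiv.swap i x := by
          rw [← Equiv.swap_apply_apply, Equiv.swap_apply_right,
            Equiv.swap_apply_of_ne_of_ne (Ne.symm hix) (Ne.symm hyx)]
        rw [← hconj, ← permMap_permMap, ← permMap_permMap,
          hv_perm_sym F H k q hv (inv_mem_permsOn hπ), P_permMap_sym F H k q hπ]
    rw [h1, Finset.sum_congr rfl h2, Finset.sum_const, card_firstSet (by omega : k ≤ k + q),
      ← Nat.cast_smul_eq_nsmul F]
  have hT : altOn F H (k + q) (lastSet (k + q) q)
      (symOn F H (k + q) (firstSet (k + q) (k + 1)) v) =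
      (((k : ℕ) + 1 : ℕ) : F)⁻¹ • (v + (k : F) • w0) := by
    rw [firstSet_succ_eq hq, symOn_insert F H hxmem v, card_firstSet (by omega : k ≤ k + q),
      map_smul, map_sum, hsumT]
  -- the U-part
  have hsumU : ∑ j ∈ insert y (lastSet (k + q) q),
      symOn F H (k + q) (firstSet (k + q) k)
        (sgn F (Equiv.swap j y) •
          altOn F H (k + q) (lastSet (k + q) q)
            (permMap F H (k + q) (Equiv.swap j y) v)) = v - (q : F) • w0 := by
    rw [Finset.sum_insert hylast]
    have h1 : symOn F H (k + q) (firstSet (k + q) k)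
        (sgn F (Equiv.swap y y) •
          altOn F H (k + q) (lastSet (k + q) q)
            (permMap F H (k + q) (Equiv.swap y y) v)) = v := by
      rw [Equiv.swap_self, show (Equiv.refl (Fin (k + q))) = (1 : Equiv.Perm (Fin (k + q))) from
        rfl, sgn_one, one_smul, permMap_one, hvP]
    have h2 : ∀ j ∈ lastSet (k + q) q,
        symOn F H (k + q) (firstSet (k + q) k)
          (sgn F (Equiv.swap j y) •
            altOn F H (k + q) (lastSet (k + q) q)
              (permMap F H (k + q) (Equiv.swap j y) v)) = -w0 := by
      intro j hj
      have hjy : j ≠ y := fun hc => hylast (hc ▸ hj)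
      rw [sgn_swap F hjy, neg_one_smul, map_neg]
      have hPj : symOn F H (k + q) (firstSet (k + q) k)
          (altOn F H (k + q) (lastSet (k + q) q)
            (permMap F H (k + q) (Equiv.swap j y) v)) = w0 := by
        by_cases hjx : j = x
        · rw [hjx, Equiv.swap_comm]
        · have hρ : Equiv.swap j x ∈ permsOn (k + q) (lastSet (k + q) q) :=
            swap_mem_permsOn hj hxlast
          have hyj : y ≠ j := Ne.symm hjy
          have hconj : Equiv.swap j x * Equiv.swap x y * (Equiv.swap j x)⁻¹ =
              Equiv.swap j y := by
            rw [← Equiv.swap_apply_apply, Equiv.swap_apply_right,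
              Equiv.swap_apply_of_ne_of_ne hyj hyx]
          rw [← hconj, ← permMap_permMap, ← permMap_permMap,
            hv_perm_alt F H k q hv (inv_mem_permsOn hρ), map_smul, map_smul, map_smul,
            map_smul, P_permMap_alt F H k q hρ, smul_smul, sgn_inv_mul, one_smul, Equiv.swap_comm]
      rw [hPj]
    rw [h1, Finset.sum_congr rfl h2, Finset.sum_const, card_lastSet (by omega : q ≤ k + q),
      ← Nat.cast_smul_eq_nsmul F, smul_neg, sub_eq_add_neg]
  have hU : symOn F H (k + q) (firstSet (k + q) k)
      (altOn F H (k + q) (lastSet (k + q) (q + 1)) v) =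
      (((q : ℕ) + 1 : ℕ) : F)⁻¹ • (v - (q : F) • w0) := by
    rw [lastSet_succ_eq hk, altOn_insert F H hylast v, card_lastSet (by omega : q ≤ k + q),
      map_smul, map_sum, hsumU]
  -- combine
  rw [hT, hU]
  have hkc : (((k : ℕ) + 1 : ℕ) : F) = (k : F) + 1 := by push_cast; ring
  have hqc : (((q : ℕ) + 1 : ℕ) : F) = (q : F) + 1 := by push_cast; ring
  have hk0 : ((k : F) + 1) ≠ 0 := by
    rw [← hkc]
    exact Nat.cast_ne_zero.mpr (by omega)
  have hq0 : ((q : F) + 1) ≠ 0 := by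
    rw [← hqc]
    exact Nat.cast_ne_zero.mpr (by omega)
  rw [hkc, hqc, smul_smul, smul_smul, mul_inv_cancel_right₀ hk0, mul_inv_cancel_right₀ hq0]
  module


theorem Hgen_le_HmixSpan {n m : ℕ} {a : Finset (Fin n)} (ha : a.card = m) :
    Hgen F H n a ≤ HmixSpan F H n m := by
  have h : HmixSpan F H n m = ⨆ b ∈ {b : Finset (Fin n) | b.card = m}, Hgen F H n b := rfl
  rw [h]
  exact le_iSup₂ (f := fun b _ => Hgen F H n b) a ha

theorem T_mem (k q : ℕ) (hk : 1 ≤ k) (hq : 1 ≤ q) {v : TP F H (k + q)}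
    (hv : v ∈ Hmix F H (k + q) k) :
    altOn F H (k + q) (lastSet (k + q) q)
        (symOn F H (k + q) (firstSet (k + q) (k + 1)) v) ∈
      Hmix F H (k + q) k ⊓ HmixSpan F H (k + q) (k + 1) := by
  rw [Submodule.mem_inf]
  constructor
  · rw [Hmix_mem_iff]
    rw [altOn_altOn F H (Finset.Subset.refl _),
      symOn_altOn_of_disjoint F H (disjoint_first_last (by omega)),
      symOn_symOn F H (firstSet_mono (by omega))]
  · have hAq1 : altOn F H (k + q) (lastSet (k + q) (q - 1)) v = v := by
      conv_lhs => rw [← hv_alt F H k q hv]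
      rw [altOn_altOn F H (lastSet_mono (by omega)), hv_alt F H k q hv]
    have hgen : symOn F H (k + q) (firstSet (k + q) (k + 1)) v ∈
        Hgen F H (k + q) (firstSet (k + q) (k + 1)) := by
      rw [Hgen_mem_iff, compl_firstSet_succ k q hq,
        ← symOn_altOn_of_disjoint F H (disjoint_first_last (by omega)), hAq1,
        symOn_symOn F H (Finset.Subset.refl _)]
    rw [altOn_apply]
    refine Submodule.smul_mem _ _ (Submodule.sum_mem _ fun σ hσ =>
      Submodule.smul_mem _ _ ?_)
    refine Hgen_le_HmixSpan F H ?_ (permMap_mem_Hgen F H σ hgen)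
    rw [Finset.card_image_of_injective _ σ.injective, card_firstSet (by omega)]

theorem U_mem (k q : ℕ) (hk : 1 ≤ k) (hq : 1 ≤ q) {v : TP F H (k + q)}
    (hv : v ∈ Hmix F H (k + q) k) :
    symOn F H (k + q) (firstSet (k + q) k)
        (altOn F H (k + q) (lastSet (k + q) (q + 1)) v) ∈
      Hmix F H (k + q) k ⊓ HmixSpan F H (k + q) (k - 1) := by
  rw [Submodule.mem_inf]
  constructor
  · rw [Hmix_mem_iff]
    rw [← symOn_altOn_of_disjoint F H (disjoint_first_last (by omega)),
      altOn_altOn F H (lastSet_mono (by omega)),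
      symOn_symOn F H (Finset.Subset.refl _)]
  · have hSk1 : symOn F H (k + q) (firstSet (k + q) (k - 1)) v = v := by
      conv_lhs => rw [← hv_sym F H k q hv]
      rw [symOn_symOn F H (firstSet_mono (by omega)), hv_sym F H k q hv]
    have hgen : altOn F H (k + q) (lastSet (k + q) (q + 1)) v ∈
        Hgen F H (k + q) (firstSet (k + q) (k - 1)) := by
      rw [Hgen_mem_iff, compl_firstSet_pred k q hk, altOn_altOn F H (Finset.Subset.refl _),
        symOn_altOn_of_disjoint F H (disjoint_first_last (by omega)), hSk1]
    rw [symOn_apply]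
    refine Submodule.smul_mem _ _ (Submodule.sum_mem _ fun σ hσ => ?_)
    refine Hgen_le_HmixSpan F H ?_ (permMap_mem_Hgen F H σ hgen)
    rw [Finset.card_image_of_injective _ σ.injective, card_firstSet (by omega)]

theorem span_alt_vanish (k q : ℕ) (hk : 1 ≤ k) {v : TP F H (k + q)}
    (hv : v ∈ HmixSpan F H (k + q) (k + 1)) :
    altOn F H (k + q) (lastSet (k + q) (q + 1)) v = 0 := by
  have hle : HmixSpan F H (k + q) (k + 1) ≤
      LinearMap.ker (altOn F H (k + q) (lastSet (k + q) (q + 1))) := by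
    have hrfl : HmixSpan F H (k + q) (k + 1) =
        ⨆ a ∈ {a : Finset (Fin (k + q)) | a.card = k + 1}, Hgen F H (k + q) a := rfl
    rw [hrfl]
    refine iSup₂_le fun a ha => ?_
    intro w hw
    rw [LinearMap.mem_ker]
    have ha' : a.card = k + 1 := ha
    have hcard2 : 2 ≤ (a ∩ lastSet (k + q) (q + 1)).card := by
      have h1 := Finset.card_inter_add_card_union a (lastSet (k + q) (q + 1))
      have h2 : (a ∪ lastSet (k + q) (q + 1)).card ≤ k + q := by
        simpa using Finset.card_le_univ (a ∪ lastSet (k + q) (q + 1))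
      have h3 : (lastSet (k + q) (q + 1)).card = q + 1 := card_lastSet (by omega)
      omega
    obtain ⟨i, hi, j, hj, hij⟩ := Finset.one_lt_card.1 (lt_of_lt_of_le one_lt_two hcard2)
    have hia := Finset.mem_inter.1 hi
    have hja := Finset.mem_inter.1 hj
    refine altOn_eq_zero F H hia.2 hja.2 hij ?_
    obtain ⟨u, rfl⟩ := hw
    simp only [LinearMap.comp_apply]
    exact permMap_symOn F H (swap_mem_permsOn hia.1 hja.1) _
  exact LinearMap.mem_ker.1 (hle hv)

theorem span_sym_vanish (k q : ℕ) (hk : 1 ≤ k) (hq : 1 ≤ q) {v : TP F H (k + q)}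
    (hv : v ∈ HmixSpan F H (k + q) (k - 1)) :
    symOn F H (k + q) (firstSet (k + q) (k + 1)) v = 0 := by
  have hle : HmixSpan F H (k + q) (k - 1) ≤
      LinearMap.ker (symOn F H (k + q) (firstSet (k + q) (k + 1))) := by
    have hrfl : HmixSpan F H (k + q) (k - 1) =
        ⨆ a ∈ {a : Finset (Fin (k + q)) | a.card = k - 1}, Hgen F H (k + q) a := rfl
    rw [hrfl]
    refine iSup₂_le fun a ha => ?_
    intro w hw
    rw [LinearMap.mem_ker]
    have ha' : a.card = k - 1 := ha
    have hacompl : (aᶜ).card = q + 1 := by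
      rw [Finset.card_compl, ha', Fintype.card_fin]
      omega
    have hcard2 : 2 ≤ (aᶜ ∩ firstSet (k + q) (k + 1)).card := by
      have h1 := Finset.card_inter_add_card_union aᶜ (firstSet (k + q) (k + 1))
      have h2 : (aᶜ ∪ firstSet (k + q) (k + 1)).card ≤ k + q := by
        simpa using Finset.card_le_univ (aᶜ ∪ firstSet (k + q) (k + 1))
      have h3 : (firstSet (k + q) (k + 1)).card = k + 1 := card_firstSet (by omega)
      omega
    obtain ⟨i, hi, j, hj, hij⟩ := Finset.one_lt_card.1 (lt_of_lt_of_le one_lt_two hcard2)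
    have hia := Finset.mem_inter.1 hi
    have hja := Finset.mem_inter.1 hj
    refine symOn_eq_zero F H hia.2 hja.2 hij ?_
    obtain ⟨u, rfl⟩ := hw
    simp only [LinearMap.comp_apply]
    rw [permMap_symOn_of_disjoint F H disjoint_compl_left (swap_mem_permsOn hia.1 hja.1),
      permMap_altOn F H (swap_mem_permsOn hia.1 hja.1), sgn_swap F hij, neg_one_smul, map_neg]
  exact LinearMap.mem_ker.1 (hle hv)

end Aux5

/-- Splitting of the Boson–Fermion component: for `k ≥ 1`, `q ≥ 1`,
`n = k + q`, the subspace `H_{k,q}` of `H^{⊗n}` decomposes as the internal direct sum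
`H_{k,q} = H_{k,q}^+ ⊕ H_{k,q}^-`, where `H_{k,q}^+ = H_{k,q} ∩ H^{⊙[k+1],∧[q-1]}` and
`H_{k,q}^- = H_{k,q} ∩ H^{⊙[k-1],∧[q+1]}`. -/
theorem Hmix_direct_sum (k q : ℕ) (hk : 1 ≤ k) (hq : 1 ≤ q) :
    (Hmix F H (k + q) k ⊓ HmixSpan F H (k + q) (k + 1)) ⊓
        (Hmix F H (k + q) k ⊓ HmixSpan F H (k + q) (k - 1)) = ⊥ ∧
    (Hmix F H (k + q) k ⊓ HmixSpan F H (k + q) (k + 1)) ⊔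
        (Hmix F H (k + q) k ⊓ HmixSpan F H (k + q) (k - 1)) = Hmix F H (k + q) k := by
  have hsum_ne : ((k : F) + (q : F)) ≠ 0 := by
    have h0 : (((k + q : ℕ)) : F) ≠ 0 := Nat.cast_ne_zero.mpr (by omega)
    push_cast at h0
    exact h0
  constructor
  · rw [eq_bot_iff]
    intro v hv
    have h1 := (Submodule.mem_inf.1 hv).1
    have h2 := (Submodule.mem_inf.1 hv).2
    have hvm := (Submodule.mem_inf.1 h1).1
    have hvp := (Submodule.mem_inf.1 h1).2
    have hvm' := (Submodule.mem_inf.1 h2).2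
    have hid := key_identity F H k q hk hq hvm
    rw [span_sym_vanish F H k q hk hq hvm', map_zero, smul_zero,
      span_alt_vanish F H k q hk hvp, map_zero, smul_zero, zero_add] at hid
    have hv0 : v = 0 := smul_cancel F hsum_ne hid.symm
    simpa [Submodule.mem_bot] using hv0
  · apply le_antisymm
    · exact sup_le inf_le_left inf_le_left
    · intro v hv
      have hid := key_identity F H k q hk hq hv
      have hT := T_mem F H k q hk hq hv
      have hU := U_mem F H k q hk hq hv
      have hv' : v = ((k : F) + (q : F))⁻¹ •
          (((q : F) * ((k : F) + 1)) •
              altOn F H (k + q) (lastSet (k + q) q)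
                (symOn F H (k + q) (firstSet (k + q) (k + 1)) v) +
            ((k : F) * ((q : F) + 1)) •
              symOn F H (k + q) (firstSet (k + q) k)
                (altOn F H (k + q) (lastSet (k + q) (q + 1)) v)) := by
        rw [hid, smul_smul, inv_mul_cancel₀ hsum_ne, one_smul]
      rw [hv']
      exact Submodule.smul_mem _ _ (Submodule.add_mem _
        (Submodule.mem_sup_left (Submodule.smul_mem _ _ hT))
        (Submodule.mem_sup_right (Submodule.smul_mem _ _ hU)))

end
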